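/- The operator norm (largest eigenvalue in absolute value) of the CHSH operator B = A₀⊗B₀ + A₀⊗B₁ + A₁⊗B₀ − A₁⊗B₁, where A₀, A₁, B₀, B₁ are Hermitian 2×2 matrices with A_i² = B_j² = I, is at most 2√2 (Tsirelson's bound). -/

import Mathlib

open Matrix Kronecker

section Aux

open scoped Matrix.Norms.L2Operator

variable {n m : Type*} [Fintype n] [Fintype m] [DecidableEq n] [DecidableEq m]

lemma aux_sub_kronecker (A B : Matrix n n ℂ) (C : Matrix m m ℂ) :
    (A - B) ⊗ₖ C = A ⊗ₖ C - B ⊗ₖ C := by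
  ext ⟨i, k⟩ ⟨j, l⟩
  simp [Matrix.kroneckerMap_apply, sub_mul]

lemma aux_kronecker_sub (A : Matrix n n ℂ) (B C : Matrix m m ℂ) :
    A ⊗ₖ (B - C) = A ⊗ₖ B - A ⊗ₖ C := by
  ext ⟨i, k⟩ ⟨j, l⟩
  simp [Matrix.kroneckerMap_apply, mul_sub]

lemma aux_conjTranspose_kronecker (A : Matrix n n ℂ) (B : Matrix m m ℂ) :
    (A ⊗ₖ B)ᴴ = Aᴴ ⊗ₖ Bᴴ := by
  ext ⟨i, k⟩ ⟨j, l⟩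
  simp [Matrix.kroneckerMap_apply, Matrix.conjTranspose_apply, mul_comm]

/-- A matrix with `Xᴴ * X = 1` has operator norm `1`. -/
lemma aux_norm_of_unitary [Nonempty n] {X : Matrix n n ℂ} (h : Xᴴ * X = 1) : ‖X‖ = 1 := by
  have h1 : ‖Xᴴ * X‖ = ‖X‖ * ‖X‖ := Matrix.l2_opNorm_conjTranspose_mul_self X
  rw [h, norm_one] at h1
  rcases mul_self_eq_one_iff.mp h1.symm with h2 | h2
  · exact h2
  · nlinarith [norm_nonneg X]

end Aux

/-- Tsirelson's bound: the CHSH operator built from Hermitian involutions has all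
eigenvalues of modulus at most `2√2`. -/
theorem stmt_15 (A₀ A₁ B₀ B₁ : Matrix (Fin 2) (Fin 2) ℂ)
    (hA₀ : A₀.IsHermitian) (hA₁ : A₁.IsHermitian)
    (hB₀ : B₀.IsHermitian) (hB₁ : B₁.IsHermitian)
    (hA₀sq : A₀ * A₀ = 1) (hA₁sq : A₁ * A₁ = 1)
    (hB₀sq : B₀ * B₀ = 1) (hB₁sq : B₁ * B₁ = 1) :
    ∀ lam : ℂ,
      Module.End.HasEigenvalue
        (Matrix.toLin' (A₀ ⊗ₖ B₀ + A₀ ⊗ₖ B₁ + A₁ ⊗ₖ B₀ - A₁ ⊗ₖ B₁)) lam →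
      ‖lam‖ ≤ 2 * Real.sqrt 2 := by
  open scoped Matrix.Norms.L2Operator in
  intro lam hlam
  set M : Matrix (Fin 2 × Fin 2) (Fin 2 × Fin 2) ℂ :=
    A₀ ⊗ₖ B₀ + A₀ ⊗ₖ B₁ + A₁ ⊗ₖ B₀ - A₁ ⊗ₖ B₁ with hM
  -- M is Hermitian
  have hMh : Mᴴ = M := by
    rw [hM]
    simp only [Matrix.conjTranspose_add, Matrix.conjTranspose_sub,
      aux_conjTranspose_kronecker, hA₀.eq, hA₁.eq, hB₀.eq, hB₁.eq]
  -- key squared identity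
  have hkey : M * M = (1 + 1 + 1 + 1 : Matrix (Fin 2 × Fin 2) (Fin 2 × Fin 2) ℂ)
      + (A₀ * A₁ - A₁ * A₀) ⊗ₖ (B₁ * B₀ - B₀ * B₁) := by
    rw [hM]
    simp only [aux_sub_kronecker, aux_kronecker_sub, Matrix.add_mul, Matrix.mul_add,
      Matrix.sub_mul, Matrix.mul_sub, ← Matrix.mul_kronecker_mul, hA₀sq, hA₁sq, hB₀sq, hB₁sq,
      Matrix.one_kronecker_one]
    abel
  -- unitary factors
  have hu : ∀ X : Matrix (Fin 2) (Fin 2) ℂ, X.IsHermitian → X * X = 1 →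
      ‖X ⊗ₖ (1 : Matrix (Fin 2) (Fin 2) ℂ)‖ = 1 ∧
      ‖(1 : Matrix (Fin 2) (Fin 2) ℂ) ⊗ₖ X‖ = 1 := by
    intro X hX hXsq
    constructor
    · apply aux_norm_of_unitary
      rw [aux_conjTranspose_kronecker, hX.eq, Matrix.conjTranspose_one,
        ← Matrix.mul_kronecker_mul, hXsq, one_mul, Matrix.one_kronecker_one]
    · apply aux_norm_of_unitary
      rw [aux_conjTranspose_kronecker, hX.eq, Matrix.conjTranspose_one,
        ← Matrix.mul_kronecker_mul, hXsq, one_mul, Matrix.one_kronecker_one]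
  -- norm of left commutator factor
  have hD : ‖(A₀ * A₁ - A₁ * A₀) ⊗ₖ (1 : Matrix (Fin 2) (Fin 2) ℂ)‖ ≤ 2 := by
    rw [aux_sub_kronecker]
    refine le_trans (norm_sub_le _ _) ?_
    have h1 : (A₀ * A₁) ⊗ₖ (1 : Matrix (Fin 2) (Fin 2) ℂ)
        = (A₀ ⊗ₖ 1) * (A₁ ⊗ₖ 1) := by
      rw [← Matrix.mul_kronecker_mul, one_mul]
    have h2 : (A₁ * A₀) ⊗ₖ (1 : Matrix (Fin 2) (Fin 2) ℂ)
        = (A₁ ⊗ₖ 1) * (A₀ ⊗ₖ 1) := by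
      rw [← Matrix.mul_kronecker_mul, one_mul]
    rw [h1, h2]
    have n0 := (hu A₀ hA₀ hA₀sq).1
    have n1 := (hu A₁ hA₁ hA₁sq).1
    have b1 := Matrix.l2_opNorm_mul (A₀ ⊗ₖ (1 : Matrix (Fin 2) (Fin 2) ℂ)) (A₁ ⊗ₖ (1 : Matrix (Fin 2) (Fin 2) ℂ))
    have b2 := Matrix.l2_opNorm_mul (A₁ ⊗ₖ (1 : Matrix (Fin 2) (Fin 2) ℂ)) (A₀ ⊗ₖ (1 : Matrix (Fin 2) (Fin 2) ℂ))
    rw [n0, n1] at b1 b2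
    linarith
  have hE : ‖(1 : Matrix (Fin 2) (Fin 2) ℂ) ⊗ₖ (B₁ * B₀ - B₀ * B₁)‖ ≤ 2 := by
    rw [aux_kronecker_sub]
    refine le_trans (norm_sub_le _ _) ?_
    have h1 : (1 : Matrix (Fin 2) (Fin 2) ℂ) ⊗ₖ (B₁ * B₀)
        = ((1 : Matrix (Fin 2) (Fin 2) ℂ) ⊗ₖ B₁) * (1 ⊗ₖ B₀) := by
      rw [← Matrix.mul_kronecker_mul, one_mul]
    have h2 : (1 : Matrix (Fin 2) (Fin 2) ℂ) ⊗ₖ (B₀ * B₁)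
        = ((1 : Matrix (Fin 2) (Fin 2) ℂ) ⊗ₖ B₀) * (1 ⊗ₖ B₁) := by
      rw [← Matrix.mul_kronecker_mul, one_mul]
    rw [h1, h2]
    have n0 := (hu B₀ hB₀ hB₀sq).2
    have n1 := (hu B₁ hB₁ hB₁sq).2
    have b1 := Matrix.l2_opNorm_mul ((1 : Matrix (Fin 2) (Fin 2) ℂ) ⊗ₖ B₁) ((1 : Matrix (Fin 2) (Fin 2) ℂ) ⊗ₖ B₀)
    have b2 := Matrix.l2_opNorm_mul ((1 : Matrix (Fin 2) (Fin 2) ℂ) ⊗ₖ B₀) ((1 : Matrix (Fin 2) (Fin 2) ℂ) ⊗ₖ B₁)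
    rw [n0, n1] at b1 b2
    linarith
  -- norm of commutator tensor
  have hC : ‖(A₀ * A₁ - A₁ * A₀) ⊗ₖ (B₁ * B₀ - B₀ * B₁)‖ ≤ 4 := by
    have hfac : (A₀ * A₁ - A₁ * A₀) ⊗ₖ (B₁ * B₀ - B₀ * B₁)
        = ((A₀ * A₁ - A₁ * A₀) ⊗ₖ (1 : Matrix (Fin 2) (Fin 2) ℂ))
          * ((1 : Matrix (Fin 2) (Fin 2) ℂ) ⊗ₖ (B₁ * B₀ - B₀ * B₁)) := by
      rw [← Matrix.mul_kronecker_mul, mul_one, one_mul]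
    rw [hfac]
    calc ‖_ * _‖ ≤ ‖(A₀ * A₁ - A₁ * A₀) ⊗ₖ (1 : Matrix (Fin 2) (Fin 2) ℂ)‖
          * ‖(1 : Matrix (Fin 2) (Fin 2) ℂ) ⊗ₖ (B₁ * B₀ - B₀ * B₁)‖ :=
        Matrix.l2_opNorm_mul _ _
      _ ≤ 2 * 2 := by
        apply mul_le_mul hD hE (norm_nonneg _) (by norm_num)
      _ = 4 := by norm_num
  -- norm of M squared
  have hM2 : ‖M‖ * ‖M‖ ≤ 8 := by
    have h1 : ‖Mᴴ * M‖ = ‖M‖ * ‖M‖ := Matrix.l2_opNorm_conjTranspose_mul_self M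
    rw [hMh, hkey] at h1
    have h2 : ‖(1 + 1 + 1 + 1 : Matrix (Fin 2 × Fin 2) (Fin 2 × Fin 2) ℂ)
        + (A₀ * A₁ - A₁ * A₀) ⊗ₖ (B₁ * B₀ - B₀ * B₁)‖
        ≤ ‖(1 + 1 + 1 + 1 : Matrix (Fin 2 × Fin 2) (Fin 2 × Fin 2) ℂ)‖
          + ‖(A₀ * A₁ - A₁ * A₀) ⊗ₖ (B₁ * B₀ - B₀ * B₁)‖ := norm_add_le _ _
    have h3 : ‖(1 + 1 + 1 + 1 : Matrix (Fin 2 × Fin 2) (Fin 2 × Fin 2) ℂ)‖ ≤ 4 := by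
      calc ‖(1 + 1 + 1 + 1 : Matrix (Fin 2 × Fin 2) (Fin 2 × Fin 2) ℂ)‖
          ≤ ‖(1 : Matrix (Fin 2 × Fin 2) (Fin 2 × Fin 2) ℂ)‖ + ‖(1 : Matrix (Fin 2 × Fin 2) (Fin 2 × Fin 2) ℂ)‖
            + ‖(1 : Matrix (Fin 2 × Fin 2) (Fin 2 × Fin 2) ℂ)‖ + ‖(1 : Matrix (Fin 2 × Fin 2) (Fin 2 × Fin 2) ℂ)‖ := by
            refine le_trans (norm_add_le _ _) ?_
            refine add_le_add ?_ le_rfl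
            refine le_trans (norm_add_le _ _) ?_
            exact add_le_add (norm_add_le _ _) le_rfl
        _ = 4 := by rw [norm_one]; norm_num
    linarith
  -- norm bound on M
  have hMn : ‖M‖ ≤ 2 * Real.sqrt 2 := by
    have hs : Real.sqrt 2 * Real.sqrt 2 = 2 := Real.mul_self_sqrt (by norm_num)
    nlinarith [norm_nonneg M, Real.sqrt_nonneg 2]
  -- eigenvalue in spectrum
  have hspec : lam ∈ spectrum ℂ M := by
    have h1 : lam ∈ spectrum ℂ (Matrix.toLin' M) :=
      Module.End.hasEigenvalue_iff_mem_spectrum.mp hlam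
    have h2 : Matrix.toLin' M = Matrix.toLinAlgEquiv' M := rfl
    rw [h2, AlgEquiv.spectrum_eq] at h1
    exact h1
  have := spectrum.norm_le_norm_of_mem hspec
  calc ‖lam‖ = ‖lam‖ := rfl
    _ ≤ ‖M‖ := this
    _ ≤ 2 * Real.sqrt 2 := hMn
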